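/- Vertex-wise perturbation stability of p-DTW: let (X,ρ) be a metric space, let p ∈ [1,∞), let τ ∈ X^m be a point sequence of complexity m ≥ 2, let c = (c₁,…,c_ℓ) and c̃ = (c̃₁,…,c̃_ℓ) be point sequences of the same complexity ℓ ≥ 2, and let η ≥ 0 satisfy ρ(c_j, c̃_j) ≤ η for every j ∈ [ℓ]. Then dtw_p(τ, c̃) ≤ dtw_p(τ, c) + (m+ℓ)^{1/p} · η. -/

import Mathlib

open scoped BigOperators

/-- An `(m₁, m₂)`-warping (with 0-based indices): a sequence of index pairs starting at
`(0,0)`, ending at `(m₁-1, m₂-1)`, whose consecutive increments lie in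
`{(0,1), (1,0), (1,1)}`. -/
def IsWarping (m₁ m₂ : ℕ) (W : List (ℕ × ℕ)) : Prop :=
  W ≠ [] ∧ W.head? = some (0, 0) ∧ W.getLast? = some (m₁ - 1, m₂ - 1) ∧
    ∀ k, k + 1 < W.length →
      W.getD (k + 1) (0, 0) = ((W.getD k (0, 0)).1, (W.getD k (0, 0)).2 + 1) ∨
      W.getD (k + 1) (0, 0) = ((W.getD k (0, 0)).1 + 1, (W.getD k (0, 0)).2) ∨
      W.getD (k + 1) (0, 0) = ((W.getD k (0, 0)).1 + 1, (W.getD k (0, 0)).2 + 1)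

/-- The cost `Σ_{(i,j) ∈ W} ρ(σ_i, τ_j)^p` of a warping `W`. -/
noncomputable def warpCost {X : Type*} [MetricSpace X] [Inhabited X]
    (p : ℝ) (σ τ : List X) (W : List (ℕ × ℕ)) : ℝ :=
  (W.map fun ij => dist (σ.getD ij.1 default) (τ.getD ij.2 default) ^ p).sum

/-- The `p`-dynamic time warping distance between two point sequences. -/
noncomputable def dtw {X : Type*} [MetricSpace X] [Inhabited X] (p : ℝ) (σ τ : List X) : ℝ :=
  sInf { c : ℝ | ∃ W, IsWarping σ.length τ.length W ∧ c = warpCost p σ τ W ^ (1 / p) }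

/-- `cost_p^q(T, c) = Σ_{τ ∈ T} dtw_p(c, τ)^q`. -/
noncomputable def dtwCost {X : Type*} [MetricSpace X] [Inhabited X]
    (p q : ℝ) (T : Finset (List X)) (c : List X) : ℝ :=
  ∑ τ ∈ T, dtw p c τ ^ q

/-- `σ` is a point sequence of complexity at most `ℓ`, i.e. `σ ∈ X^{≤ℓ}`. -/
def SeqLE {X : Type*} (ℓ : ℕ) (σ : List X) : Prop := 2 ≤ σ.length ∧ σ.length ≤ ℓ

lemma list_map_sum_eq {α : Type*} (f : α → ℝ) (d : α) (l : List α) :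
    (l.map f).sum = ∑ i ∈ Finset.range l.length, f (l.getD i d) := by
  induction l with
  | nil => simp
  | cons a l ih =>
    rw [List.map_cons, List.sum_cons, List.length_cons, Finset.sum_range_succ']
    simp [ih, add_comm]

lemma warpCost_nonneg {X : Type*} [MetricSpace X] [Inhabited X]
    (p : ℝ) (σ τ : List X) (W : List (ℕ × ℕ)) : 0 ≤ warpCost p σ τ W := by
  apply List.sum_nonneg
  intro x hx
  simp only [List.mem_map] at hx
  obtain ⟨ij, _, rfl⟩ := hx
  exact Real.rpow_nonneg dist_nonneg p

lemma warping_length_le {m₁ m₂ : ℕ} {W : List (ℕ × ℕ)} (h₁ : 1 ≤ m₁) (h₂ : 1 ≤ m₂)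
    (h : IsWarping m₁ m₂ W) :
    W.length ≤ m₁ + m₂ := by
  obtain ⟨hne, hhead, hlast, hstep⟩ := h
  have hlen : 1 ≤ W.length := List.length_pos_iff.2 hne
  have hmono : ∀ k < W.length, k ≤ (W.getD k (0, 0)).1 + (W.getD k (0, 0)).2 := by
    intro k
    induction k with
    | zero => intro _; exact Nat.zero_le _
    | succ n ihn =>
      intro hk
      have h1 := ihn (by omega)
      rcases hstep n hk with h2 | h2 | h2 <;> rw [h2] <;> dsimp only <;> omega
  have hgl : W.getD (W.length - 1) (0, 0) = (m₁ - 1, m₂ - 1) := by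
    rw [List.getD_eq_getElem _ _ (by omega), ← List.getLast_eq_getElem hne]
    rw [List.getLast?_eq_getLast_of_ne_nil hne] at hlast
    exact Option.some_injective _ hlast
  have := hmono (W.length - 1) (by omega)
  rw [hgl] at this
  simp at this
  omega

lemma warping_exists (m₁ m₂ : ℕ) (h₁ : 1 ≤ m₁) (h₂ : 1 ≤ m₂) :
    ∃ W, IsWarping m₁ m₂ W := by
  refine ⟨(List.range (m₁ + m₂ - 1)).map fun k => (min k (m₁ - 1), k - min k (m₁ - 1)),
    ?_, ?_, ?_, ?_⟩
  · simp only [ne_eq, List.map_eq_nil_iff, List.range_eq_nil]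
    omega
  · rw [List.head?_eq_getElem?, List.getElem?_eq_getElem (by simp; omega)]
    simp
  · rw [List.getLast?_eq_getElem?, List.getElem?_eq_getElem (by simp; omega)]
    simp only [List.length_map, List.length_range, List.getElem_map, List.getElem_range,
      Option.some.injEq, Prod.mk.injEq]
    constructor <;> omega
  · intro k hk
    simp only [List.length_map, List.length_range] at hk
    rw [List.getD_eq_getElem _ _ (by simp; omega), List.getD_eq_getElem _ _ (by simp; omega)]
    simp only [List.getElem_map, List.getElem_range, Prod.mk.injEq]
    rcases le_or_gt (k + 1) (m₁ - 1) with h | h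
    · right; left; constructor <;> omega
    · rcases le_or_gt k (m₁ - 1) with h' | h'
      · left; constructor <;> omega
      · left; constructor <;> omega

/-- **Vertex-wise perturbation stability of p-DTW** (used in Lemma
`lemma:correctnessapproxscheme`): if `c` and `c̃` have the same complexity `ℓ` and
`ρ(c_j, c̃_j) ≤ η` for every `j`, then for any point sequence `τ` of complexity `m`,
`dtw_p(τ, c̃) ≤ dtw_p(τ, c) + (m+ℓ)^{1/p}·η`. -/
theorem dtw_vertexwise_perturbation {X : Type*} [MetricSpace X] [Inhabited X]
    (p : ℝ) (hp : 1 ≤ p)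
    (τ c c' : List X)
    (hτ : 2 ≤ τ.length) (hc : 2 ≤ c.length) (hlen : c'.length = c.length)
    (η : ℝ) (hη : 0 ≤ η)
    (hpert : ∀ j < c.length, dist (c.getD j default) (c'.getD j default) ≤ η) :
    dtw p τ c' ≤ dtw p τ c + ((τ.length + c.length : ℕ) : ℝ) ^ (1 / p) * η := by
  have hp0 : 0 < p := by linarith
  set K : ℝ := ((τ.length + c.length : ℕ) : ℝ) ^ (1 / p) * η with hKdef
  have h1p : 0 < 1 / p := by positivity
  -- perturbation bound for all indices
  have hpert' : ∀ j : ℕ, dist (c.getD j default) (c'.getD j default) ≤ η := by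
    intro j
    by_cases hj : j < c.length
    · exact hpert j hj
    · rw [List.getD_eq_default _ _ (by omega), List.getD_eq_default _ _ (by omega)]
      simpa using hη
  -- the set of warping costs for (τ, c') is bounded below by 0
  have hbdd : BddBelow {r : ℝ | ∃ W, IsWarping τ.length c'.length W ∧
      r = warpCost p τ c' W ^ (1 / p)} := by
    refine ⟨0, ?_⟩
    rintro r ⟨W, _, rfl⟩
    exact Real.rpow_nonneg (warpCost_nonneg p τ c' W) _
  -- key estimate for any fixed warping W
  have key : ∀ W, IsWarping τ.length c.length W →
      dtw p τ c' ≤ warpCost p τ c W ^ (1 / p) + K := by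
    intro W hW
    have hW' : IsWarping τ.length c'.length W := by rwa [hlen]
    have h1 : dtw p τ c' ≤ warpCost p τ c' W ^ (1 / p) :=
      csInf_le hbdd ⟨W, hW', rfl⟩
    refine h1.trans ?_
    -- rewrite costs as sums over Finset.range
    rw [warpCost, warpCost, list_map_sum_eq _ ((0 : ℕ), (0 : ℕ)),
      list_map_sum_eq _ ((0 : ℕ), (0 : ℕ))]
    set n := W.length with hn
    set F : ℕ → ℝ := fun i =>
      dist (τ.getD (W.getD i (0, 0)).1 default) (c.getD (W.getD i (0, 0)).2 default) with hF
    set F' : ℕ → ℝ := fun i =>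
      dist (τ.getD (W.getD i (0, 0)).1 default) (c'.getD (W.getD i (0, 0)).2 default) with hF'
    have step1 : (∑ i ∈ Finset.range n, F' i ^ p) ^ (1 / p) ≤
        (∑ i ∈ Finset.range n, (F i + η) ^ p) ^ (1 / p) := by
      apply Real.rpow_le_rpow
      · exact Finset.sum_nonneg fun i _ => Real.rpow_nonneg dist_nonneg p
      · apply Finset.sum_le_sum
        intro i _
        apply Real.rpow_le_rpow dist_nonneg _ hp0.le
        calc F' i ≤ F i + dist (c.getD (W.getD i (0,0)).2 default)
              (c'.getD (W.getD i (0,0)).2 default) := dist_triangle _ _ _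
          _ ≤ F i + η := by linarith [hpert' (W.getD i (0,0)).2]
      · exact h1p.le
    have step2 : (∑ i ∈ Finset.range n, (F i + η) ^ p) ^ (1 / p) ≤
        (∑ i ∈ Finset.range n, F i ^ p) ^ (1 / p) +
          (∑ i ∈ Finset.range n, η ^ p) ^ (1 / p) :=
      Real.Lp_add_le_of_nonneg (Finset.range n) hp
        (fun i _ => dist_nonneg) (fun i _ => hη)
    have step3 : (∑ i ∈ Finset.range n, η ^ p) ^ (1 / p) ≤ K := by
      rw [Finset.sum_const, Finset.card_range, nsmul_eq_mul]
      have hηp : (0 : ℝ) ≤ η ^ p := Real.rpow_nonneg hη p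
      rw [Real.mul_rpow (by positivity) hηp]
      have hpe : (η ^ p) ^ (1 / p) = η := by
        rw [← Real.rpow_mul hη, mul_one_div_cancel hp0.ne', Real.rpow_one]
      rw [hpe, hKdef]
      apply mul_le_mul_of_nonneg_right _ hη
      apply Real.rpow_le_rpow (by positivity) _ h1p.le
      exact_mod_cast warping_length_le (by omega) (by omega) hW
    calc (∑ i ∈ Finset.range n, F' i ^ p) ^ (1 / p)
        ≤ (∑ i ∈ Finset.range n, (F i + η) ^ p) ^ (1 / p) := step1
      _ ≤ (∑ i ∈ Finset.range n, F i ^ p) ^ (1 / p) +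
          (∑ i ∈ Finset.range n, η ^ p) ^ (1 / p) := step2
      _ ≤ (∑ i ∈ Finset.range n, F i ^ p) ^ (1 / p) + K := by linarith [step3]
  -- conclude via the infimum over warpings for (τ, c)
  obtain ⟨W₀, hW₀⟩ := warping_exists τ.length c.length (by omega) (by omega)
  have hne : {r : ℝ | ∃ W, IsWarping τ.length c.length W ∧
      r = warpCost p τ c W ^ (1 / p)}.Nonempty := ⟨_, W₀, hW₀, rfl⟩
  have : dtw p τ c' - K ≤ dtw p τ c := by
    conv_rhs => rw [dtw]
    apply le_csInf hne
    rintro r ⟨W, hW, rfl⟩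
    linarith [key W hW]
  linarith
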